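/- Let 𝓛 be the lamplighter group, F̃_n = {(t, K) ∈ 𝓛 : t ∈ [0,n]∩ℤ and K ⊆ [0,n]∩ℤ}, and F_n = (F̃_n)⁻¹ · F̃_n. Define l : ℕ → ℕ by l(1) = 1 and l(n) = 17^{2^n · l(n−1)} for n ≥ 2, and define E₁ = F_{l(1)} and E_n = (E_{n−1})^{2^n−2} · F_{l(n)} · (E_{n−1})^{2^n−2} for n ≥ 2, where A^k denotes the k-fold product set. Then |E_n \ F_{l(n)}| / |F_{l(n)}| → 0 as n → ∞; equivalently, |F_{l(n)}| / |E_n| → 1. -/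

import Mathlib

open scoped symmDiff

/-- The lamplighter group `ℤ ≀ ℤ₂`, realized as pairs `(t, K)` with `t ∈ ℤ` the
position of the lamplighter and `K` a finite set of integers (the lamps turned on). -/
structure Lamp where
  pos : ℤ
  lamps : Finset ℤ
deriving DecidableEq

namespace Lamp

/-- The shift `t + K` of a finite set of integers. -/
def shift (t : ℤ) (K : Finset ℤ) : Finset ℤ := K.image (t + ·)

lemma mem_shift {t x : ℤ} {K : Finset ℤ} : x ∈ shift t K ↔ x - t ∈ K := by
  constructor
  · rintro h
    simp only [shift, Finset.mem_image] at h
    obtain ⟨k, hk, rfl⟩ := h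
    simpa using hk
  · intro h
    simp only [shift, Finset.mem_image]
    exact ⟨x - t, h, by ring⟩

lemma shift_symmDiff (t : ℤ) (A B : Finset ℤ) :
    shift t (A ∆ B) = shift t A ∆ shift t B := by
  ext x
  simp [mem_shift, Finset.mem_symmDiff]

lemma shift_shift (s t : ℤ) (K : Finset ℤ) : shift s (shift t K) = shift (s + t) K := by
  ext x
  simp [mem_shift, sub_sub]

lemma shift_zero (K : Finset ℤ) : shift 0 K = K := by
  ext x; simp [mem_shift]

lemma shift_empty (t : ℤ) : shift t (∅ : Finset ℤ) = ∅ := by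
  simp [shift]

lemma empty_symmDiff (A : Finset ℤ) : (∅ : Finset ℤ) ∆ A = A := by
  ext x; simp [Finset.mem_symmDiff]

lemma symmDiff_empty (A : Finset ℤ) : A ∆ (∅ : Finset ℤ) = A := by
  ext x; simp [Finset.mem_symmDiff]

lemma symmDiff_self' (A : Finset ℤ) : A ∆ A = (∅ : Finset ℤ) := by
  ext x; simp [Finset.mem_symmDiff]

instance : Mul Lamp := ⟨fun a b => ⟨a.pos + b.pos, a.lamps ∆ shift a.pos b.lamps⟩⟩
instance : One Lamp := ⟨⟨0, ∅⟩⟩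
instance : Inv Lamp := ⟨fun a => ⟨-a.pos, shift (-a.pos) a.lamps⟩⟩

@[simp] lemma mul_pos' (a b : Lamp) : (a * b).pos = a.pos + b.pos := rfl
@[simp] lemma mul_lamps (a b : Lamp) : (a * b).lamps = a.lamps ∆ shift a.pos b.lamps := rfl
@[simp] lemma one_pos' : (1 : Lamp).pos = 0 := rfl
@[simp] lemma one_lamps : (1 : Lamp).lamps = ∅ := rfl
@[simp] lemma inv_pos' (a : Lamp) : a⁻¹.pos = -a.pos := rfl
@[simp] lemma inv_lamps (a : Lamp) : a⁻¹.lamps = shift (-a.pos) a.lamps := rfl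

@[ext] lemma ext' {a b : Lamp} (h1 : a.pos = b.pos) (h2 : a.lamps = b.lamps) : a = b := by
  cases a; cases b; simp_all

instance : Group Lamp where
  mul_assoc a b c := by
    refine ext' ?_ ?_
    · simp [add_assoc]
    · simp [shift_symmDiff, shift_shift, symmDiff_assoc]
  one_mul a := by
    refine ext' ?_ ?_
    · simp
    · rw [mul_lamps, one_lamps, one_pos', shift_zero, empty_symmDiff]
  mul_one a := by
    refine ext' ?_ ?_
    · simp
    · rw [mul_lamps, one_lamps, shift_empty, symmDiff_empty]
  inv_mul_cancel a := by
    refine ext' ?_ ?_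
    · simp
    · rw [mul_lamps, inv_lamps, inv_pos', symmDiff_self', one_lamps]

/-- The standard right Følner sets `F̃ n` of the lamplighter group. -/
def Ftilde (n : ℕ) : Set Lamp :=
  {x | x.pos ∈ Set.Icc (0 : ℤ) n ∧ ∀ k ∈ x.lamps, k ∈ Set.Icc (0 : ℤ) n}

end Lamp

open Pointwise Filter Topology

/-- The two-sided Følner sets `F n = (F̃ n)⁻¹ · F̃ n` of the lamplighter group. -/
def Lamp.F (n : ℕ) : Set Lamp := (Lamp.Ftilde n)⁻¹ * Lamp.Ftilde n


namespace Lamp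

/-- The set of relevant positions of a lamp configuration. -/
def dat (x : Lamp) : Finset ℤ := insert 0 (insert x.pos x.lamps)

lemma zero_mem_dat (x : Lamp) : (0:ℤ) ∈ dat x := by simp [dat]
lemma pos_mem_dat (x : Lamp) : x.pos ∈ dat x := by simp [dat]
lemma lamps_subset_dat (x : Lamp) {k : ℤ} (hk : k ∈ x.lamps) : k ∈ dat x := by
  simp [dat, hk]
lemma mem_dat {x : Lamp} {k : ℤ} :
    k ∈ dat x ↔ k = 0 ∨ k = x.pos ∨ k ∈ x.lamps := by simp [dat]

/-- Window characterization of membership in `F N`. -/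
lemma mem_F_iff {N : ℕ} {x : Lamp} :
    x ∈ F N ↔ ∃ m : ℤ, ∀ k ∈ dat x, m ≤ k ∧ k ≤ m + N := by
  constructor
  · rintro hx
    rw [F, Set.mem_mul] at hx
    obtain ⟨a, ha, b, hb, rfl⟩ := hx
    rw [Set.mem_inv] at ha
    obtain ⟨hapos, halamps⟩ := ha
    obtain ⟨hbpos, hblamps⟩ := hb
    simp only [inv_pos', Set.mem_Icc, inv_lamps] at hapos halamps
    simp only [Set.mem_Icc] at hbpos hblamps
    refine ⟨a.pos, ?_⟩
    intro k hk
    rw [mem_dat] at hk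
    rcases hk with rfl | rfl | hk
    · omega
    · rw [mul_pos']
      have := hbpos
      omega
    · rw [mul_lamps, Finset.mem_symmDiff] at hk
      have hk' : k ∈ a.lamps ∨ k - a.pos ∈ b.lamps := by
        rcases hk with ⟨h, _⟩ | ⟨h, _⟩
        · exact Or.inl h
        · exact Or.inr (mem_shift.1 h)
      rcases hk' with h | h
      · have : (k - a.pos) ∈ shift (-a.pos) a.lamps := by
          rw [mem_shift]; simpa using h
        have := halamps _ this
        omega
      · have := hblamps _ h
        omega
  · rintro ⟨m, hm⟩
    have h0 := hm 0 (zero_mem_dat x)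
    have hp := hm x.pos (pos_mem_dat x)
    refine Set.mem_mul.2 ⟨⟨m, ∅⟩, ?_, ⟨-m + x.pos, shift (-m) x.lamps⟩, ?_, ?_⟩
    · rw [Set.mem_inv]
      constructor
      · simp only [inv_pos', Set.mem_Icc]
        omega
      · intro k hk
        simp only [inv_lamps, shift_empty] at hk
        exact absurd hk (Finset.notMem_empty k)
    · constructor
      · simp only [Set.mem_Icc]; constructor <;> omega
      · intro k hk
        rw [mem_shift] at hk
        have := hm _ (lamps_subset_dat x hk)
        simp only [Set.mem_Icc]
        omega
    · refine ext' ?_ ?_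
      · simp
      · rw [mul_lamps, empty_symmDiff, shift_shift]
        rw [show m + -m = 0 by ring, shift_zero]

end Lamp

namespace Lamp

lemma F_mono {a b : ℕ} (h : a ≤ b) : F a ⊆ F b := by
  intro x hx
  rw [mem_F_iff] at hx ⊢
  obtain ⟨m, hm⟩ := hx
  refine ⟨m, fun k hk => ?_⟩
  have := hm k hk
  have hab : (a : ℤ) ≤ (b : ℤ) := by exact_mod_cast h
  omega

lemma one_mem_F (a : ℕ) : (1 : Lamp) ∈ F a := by
  rw [mem_F_iff]
  refine ⟨0, fun k hk => ?_⟩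
  rw [mem_dat] at hk
  simp only [one_pos', one_lamps, Finset.notMem_empty, or_false] at hk
  have : (0:ℤ) ≤ a := Int.ofNat_nonneg a
  omega

lemma mul_mem_F {a b : ℕ} {x y : Lamp} (hx : x ∈ F a) (hy : y ∈ F b) :
    x * y ∈ F (a + b) := by
  rw [mem_F_iff] at hx hy ⊢
  obtain ⟨m₁, h1⟩ := hx
  obtain ⟨m₂, h2⟩ := hy
  refine ⟨min m₁ (x.pos + m₂), fun k hk => ?_⟩
  have h10 := h1 0 (zero_mem_dat x)
  have h1p := h1 x.pos (pos_mem_dat x)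
  have h20 := h2 0 (zero_mem_dat y)
  have h2p := h2 y.pos (pos_mem_dat y)
  push_cast
  rw [mem_dat] at hk
  rcases hk with rfl | rfl | hk
  · omega
  · rw [mul_pos']; omega
  · rw [mul_lamps, Finset.mem_symmDiff] at hk
    have hk' : k ∈ x.lamps ∨ k - x.pos ∈ y.lamps := by
      rcases hk with ⟨h, _⟩ | ⟨h, _⟩
      · exact Or.inl h
      · exact Or.inr (mem_shift.1 h)
    rcases hk' with h | h
    · have := h1 k (lamps_subset_dat x h); omega
    · have := h2 _ (lamps_subset_dat y h); omega

lemma pow_subset_F {S : Set Lamp} {a : ℕ} (h : S ⊆ F a) (k : ℕ) :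
    S ^ k ⊆ F (k * a) := by
  induction k with
  | zero =>
    intro x hx
    rw [pow_zero, Set.mem_one] at hx
    subst hx
    rw [Nat.zero_mul]; exact one_mem_F 0
  | succ k ih =>
    intro x hx
    rw [pow_succ, Set.mem_mul] at hx
    obtain ⟨u, hu, v, hv, rfl⟩ := hx
    have := mul_mem_F (ih hu) (h hv)
    rwa [Nat.succ_mul]

lemma one_mem_pow {S : Set Lamp} (h1 : (1:Lamp) ∈ S) (k : ℕ) : (1:Lamp) ∈ S ^ k := by
  induction k with
  | zero => rw [pow_zero]; exact Set.mem_one.2 rfl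
  | succ k ih =>
    rw [pow_succ]
    exact ⟨1, ih, 1, h1, mul_one 1⟩

lemma finite_F (N : ℕ) : (F N).Finite := by
  have hsub : F N ⊆ (fun p : ℤ × Finset ℤ => Lamp.mk p.1 p.2) ''
      ↑((Finset.Icc (-(N:ℤ)) N) ×ˢ (Finset.Icc (-(N:ℤ)) N).powerset) := by
    intro x hx
    rw [mem_F_iff] at hx
    obtain ⟨m, hm⟩ := hx
    have h0 := hm 0 (zero_mem_dat x)
    have hp := hm x.pos (pos_mem_dat x)
    refine ⟨(x.pos, x.lamps), ?_, rfl⟩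
    simp only [Finset.coe_product, Set.mem_prod, Finset.mem_coe, Finset.mem_Icc,
      Finset.mem_powerset]
    refine ⟨⟨by omega, by omega⟩, fun k hk => ?_⟩
    have := hm k (lamps_subset_dat x hk)
    rw [Finset.mem_Icc]
    omega
  exact Set.Finite.subset (Set.Finite.image _ (Finset.finite_toSet _)) hsub

lemma ncard_mul_le (s t : Set Lamp) : (s * t).ncard ≤ s.ncard * t.ncard := by
  rw [← Nat.card_coe_set_eq, ← Nat.card_coe_set_eq, ← Nat.card_coe_set_eq]
  exact Set.natCard_mul_le

end Lamp

namespace Lamp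

/-- The good subset of `F N`: configurations having a window with margin `2r`
around `{0, pos}`. -/
def G (N r : ℕ) : Set Lamp :=
  {x | ∃ m : ℤ, (∀ k ∈ dat x, m ≤ k ∧ k ≤ m + N) ∧
      m + 2*r ≤ min 0 x.pos ∧ max 0 x.pos + 2*r ≤ m + N}

lemma G_subset_F {N r : ℕ} : G N r ⊆ F N := by
  rintro x ⟨m, hm, _, _⟩
  exact mem_F_iff.2 ⟨m, hm⟩

lemma sandwich_mem_F {N r : ℕ} {g x h : Lamp}
    (hg : g ∈ F r) (hx : x ∈ G N r) (hh : h ∈ F r) : g * x * h ∈ F N := by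
  rw [mem_F_iff] at hg hh
  obtain ⟨mg, hmg⟩ := hg
  obtain ⟨mh, hmh⟩ := hh
  obtain ⟨m, hm, hml, hmr⟩ := hx
  have hg0 := hmg 0 (zero_mem_dat g)
  have hgp := hmg g.pos (pos_mem_dat g)
  have hh0 := hmh 0 (zero_mem_dat h)
  have hhp := hmh h.pos (pos_mem_dat h)
  have hx0 := hm 0 (zero_mem_dat x)
  have hxp := hm x.pos (pos_mem_dat x)
  rw [mem_F_iff]
  refine ⟨g.pos + m, fun k hk => ?_⟩
  rw [mem_dat] at hk
  rcases hk with rfl | rfl | hk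
  · omega
  · simp only [mul_pos']; omega
  · simp only [mul_lamps, mul_pos'] at hk
    have hk' : k ∈ g.lamps ∨ k - g.pos ∈ x.lamps ∨ k - (g.pos + x.pos) ∈ h.lamps := by
      rcases Finset.mem_symmDiff.1 hk with ⟨hin, _⟩ | ⟨hin, _⟩
      · rcases Finset.mem_symmDiff.1 hin with ⟨h2, _⟩ | ⟨h2, _⟩
        · exact Or.inl h2
        · exact Or.inr (Or.inl (mem_shift.1 h2))
      · exact Or.inr (Or.inr (mem_shift.1 hin))
    rcases hk' with hin | hin | hin
    · have := hmg k (lamps_subset_dat g hin); omega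
    · have := hm _ (lamps_subset_dat x hin); omega
    · have := hmh _ (lamps_subset_dat h hin); omega

lemma sandwich_subset {N r : ℕ} {A B : Set Lamp} (hA : A ⊆ F r) (hB : B ⊆ F r) :
    A * G N r * B ⊆ F N := by
  rintro z hz
  rw [Set.mem_mul] at hz
  obtain ⟨w, hw, b, hb, rfl⟩ := hz
  rw [Set.mem_mul] at hw
  obtain ⟨a, ha, x, hx, rfl⟩ := hw
  exact sandwich_mem_F (hA ha) hx (hB hb)

end Lamp

namespace Lamp

def mn (x : Lamp) : ℤ := (dat x).min' ⟨0, zero_mem_dat x⟩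
def mx (x : Lamp) : ℤ := (dat x).max' ⟨0, zero_mem_dat x⟩

lemma mn_le {x : Lamp} {k : ℤ} (hk : k ∈ dat x) : mn x ≤ k := Finset.min'_le _ _ hk
lemma le_mx {x : Lamp} {k : ℤ} (hk : k ∈ dat x) : k ≤ mx x := Finset.le_max' _ _ hk

lemma subZshift_inj (c : ℤ) : Function.Injective (fun k : ℤ => k - c) := by
  intro u v h
  dsimp only at h
  omega

lemma card_Icc_int (a b : ℕ) : (Finset.Icc (-(a:ℤ)) b).card = a + b + 1 := by
  rw [Int.card_Icc]
  omega

lemma card_Icc_int' (b : ℕ) : (Finset.Icc (0:ℤ) b).card = b + 1 := by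
  rw [Int.card_Icc]
  omega

lemma card_F_lower (N : ℕ) : (N+1)^2 * 2^N ≤ (F N).ncard := by
  classical
  set D : Finset (ℤ × ℤ × Finset ℤ) :=
    (Finset.Icc (0:ℤ) N) ×ˢ ((Finset.Icc (0:ℤ) N) ×ˢ (Finset.Icc (1:ℤ) N).powerset) with hD
  set φ : ℤ × ℤ × Finset ℤ → Lamp :=
    (fun p => ⟨p.2.1 - p.1, (insert (0:ℤ) p.2.2).image (· - p.1)⟩) with hφ
  have hmemD : ∀ p : ℤ × ℤ × Finset ℤ, p ∈ D →
      (0 ≤ p.1 ∧ p.1 ≤ N) ∧ (0 ≤ p.2.1 ∧ p.2.1 ≤ N) ∧ p.2.2 ⊆ Finset.Icc (1:ℤ) N := by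
    intro p hp
    simp only [hD, Finset.mem_product, Finset.mem_Icc, Finset.mem_powerset] at hp
    exact hp
  have hmem : ∀ p ∈ D, φ p ∈ F N := by
    intro p hp
    obtain ⟨⟨ha0, haN⟩, ⟨hi0, hiN⟩, hL⟩ := hmemD p hp
    rw [mem_F_iff]
    refine ⟨-p.1, fun k hk => ?_⟩
    rw [mem_dat] at hk
    rcases hk with rfl | rfl | hk
    · omega
    · simp only [hφ]; omega
    · simp only [hφ] at hk
      obtain ⟨j, hj, rfl⟩ := Finset.mem_image.1 hk
      rcases Finset.mem_insert.1 hj with rfl | hj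
      · omega
      · have := Finset.mem_Icc.1 (hL hj)
        omega
  have hinj : Set.InjOn φ ↑D := by
    rintro p hp q hq heq
    obtain ⟨⟨ha0, haN⟩, ⟨hi0, hiN⟩, hL⟩ := hmemD p (Finset.mem_coe.1 hp)
    obtain ⟨⟨hb0, hbN⟩, ⟨hj0, hjN⟩, hM⟩ := hmemD q (Finset.mem_coe.1 hq)
    have hpos : p.2.1 - p.1 = q.2.1 - q.1 := congrArg Lamp.pos heq
    have hlam : (insert (0:ℤ) p.2.2).image (· - p.1) =
        (insert (0:ℤ) q.2.2).image (· - q.1) := congrArg Lamp.lamps heq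
    have hle : ∀ (L M : Finset ℤ) (a b : ℤ), M ⊆ Finset.Icc (1:ℤ) N →
        (insert (0:ℤ) L).image (· - a) = (insert (0:ℤ) M).image (· - b) → -b ≤ -a := by
      intro L M a b hMsub hLM
      have h1 : -a ∈ (insert (0:ℤ) L).image (· - a) :=
        Finset.mem_image.2 ⟨0, Finset.mem_insert_self _ _, by ring⟩
      rw [hLM] at h1
      obtain ⟨j, hj, hj2⟩ := Finset.mem_image.1 h1
      rcases Finset.mem_insert.1 hj with rfl | hj
      · omega
      · have := Finset.mem_Icc.1 (hMsub hj)
        omega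
    have hab : p.1 = q.1 := by
      have h1 := hle p.2.2 q.2.2 p.1 q.1 hM hlam
      have h2 := hle q.2.2 p.2.2 q.1 p.1 hL hlam.symm
      omega
    have hij : p.2.1 = q.2.1 := by omega
    have hLM : p.2.2 = q.2.2 := by
      rw [hab] at hlam
      have h3 := Finset.image_injective (subZshift_inj q.1) hlam
      have h0p : (0:ℤ) ∉ p.2.2 := by
        intro h
        have := Finset.mem_Icc.1 (hL h); omega
      have h0q : (0:ℤ) ∉ q.2.2 := by
        intro h
        have := Finset.mem_Icc.1 (hM h); omega
      rw [← Finset.erase_insert h0p, ← Finset.erase_insert h0q, h3]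
    exact Prod.ext hab (Prod.ext hij hLM)
  have hcard : D.card = (N+1)^2 * 2^N := by
    simp only [hD, Finset.card_product, Finset.card_powerset, card_Icc_int']
    have : (Finset.Icc (1:ℤ) N).card = N := by rw [Int.card_Icc]; omega
    rw [this]
    ring
  calc (N+1)^2 * 2^N = D.card := hcard.symm
    _ = (↑D : Set (ℤ × ℤ × Finset ℤ)).ncard := (Set.ncard_coe_finset D).symm
    _ = (φ '' ↑D).ncard := (Set.ncard_image_of_injOn hinj).symm
    _ ≤ (F N).ncard := by
        refine Set.ncard_le_ncard ?_ (finite_F N)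
        rintro y ⟨p, hp, rfl⟩
        exact hmem p (Finset.mem_coe.1 hp)

lemma card_F_upper (r : ℕ) : (F r).ncard ≤ (r+1)^2 * 2^(r+1) := by
  classical
  set D : Finset (ℤ × ℤ × Finset ℤ) :=
    (Finset.Icc (0:ℤ) r) ×ˢ ((Finset.Icc (0:ℤ) r) ×ˢ (Finset.Icc (0:ℤ) r).powerset) with hD
  set ψ : Lamp → ℤ × ℤ × Finset ℤ :=
    (fun x => (-(mn x), x.pos - mn x, x.lamps.image (· - mn x))) with hψ
  have hinj : Function.Injective ψ := by
    intro x y h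
    simp only [hψ, Prod.mk.injEq] at h
    obtain ⟨h1, h2, h3⟩ := h
    have hmn : mn x = mn y := by omega
    refine ext' (by omega) ?_
    rw [hmn] at h3
    exact Finset.image_injective (subZshift_inj (mn y)) h3
  have hrange : ψ '' F r ⊆ ↑D := by
    rintro y ⟨x, hx, rfl⟩
    rw [mem_F_iff] at hx
    obtain ⟨m, hm⟩ := hx
    have h0 := hm 0 (zero_mem_dat x)
    have hp := hm x.pos (pos_mem_dat x)
    have hmn1 : m ≤ mn x := hm _ (Finset.min'_mem _ _) |>.1
    have hmn2 : mn x ≤ 0 := mn_le (zero_mem_dat x)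
    have hmn3 : mn x ≤ x.pos := mn_le (pos_mem_dat x)
    simp only [hD, hψ, Finset.mem_coe, Finset.mem_product, Finset.mem_Icc,
      Finset.mem_powerset]
    refine ⟨by omega, by omega, ?_⟩
    intro k hk
    obtain ⟨j, hj, rfl⟩ := Finset.mem_image.1 hk
    have hj1 := hm _ (lamps_subset_dat x hj)
    have hj2 := mn_le (lamps_subset_dat x hj)
    rw [Finset.mem_Icc]
    omega
  have hcard : D.card = (r+1)^2 * 2^(r+1) := by
    simp only [hD, Finset.card_product, Finset.card_powerset, card_Icc_int']
    ring
  calc (F r).ncard = (ψ '' F r).ncard := (Set.ncard_image_of_injOn hinj.injOn).symm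
    _ ≤ (↑D : Set (ℤ × ℤ × Finset ℤ)).ncard :=
        Set.ncard_le_ncard hrange (Finset.finite_toSet D)
    _ = D.card := Set.ncard_coe_finset D
    _ = (r+1)^2 * 2^(r+1) := hcard

end Lamp

namespace Lamp

lemma card_bad (N r : ℕ) :
    (F N \ G N r).ncard ≤ 2 * ((2*r+1) * ((2*N+1) * 2^(N+1))) := by
  classical
  set Bad1 : Set Lamp := {x | x ∈ F N ∧ min 0 x.pos - 2*(r:ℤ) < mn x} with hB1
  set Bad2 : Set Lamp := {x | x ∈ F N ∧ mx x < max 0 x.pos + 2*(r:ℤ)} with hB2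
  set E1 : Finset (ℤ × ℤ × Finset ℤ) :=
    (Finset.Icc (0:ℤ) ((2*r : ℕ):ℤ)) ×ˢ
      ((Finset.Icc (-(N:ℤ)) N) ×ˢ (Finset.Icc (0:ℤ) N).powerset) with hE1
  have hcardE1 : E1.card = (2*r+1) * ((2*N+1) * 2^(N+1)) := by
    simp only [hE1, Finset.card_product, Finset.card_powerset, card_Icc_int',
      card_Icc_int]
    ring
  have hsub : F N \ G N r ⊆ Bad1 ∪ Bad2 := by
    rintro x ⟨hxF, hxG⟩
    rw [Set.mem_union]
    by_contra hc
    push_neg at hc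
    obtain ⟨hc1, hc2⟩ := hc
    have d1 : mn x ≤ min 0 x.pos - 2*(r:ℤ) := by
      by_contra hlt
      exact hc1 ⟨hxF, by omega⟩
    have d2 : max 0 x.pos + 2*(r:ℤ) ≤ mx x := by
      by_contra hlt
      exact hc2 ⟨hxF, by omega⟩
    apply hxG
    obtain ⟨m, hm⟩ := mem_F_iff.1 hxF
    have hm1 : m ≤ mn x := (hm _ (Finset.min'_mem _ _)).1
    have hm2 : mx x ≤ m + N := (hm _ (Finset.max'_mem _ _)).2
    refine ⟨mn x, fun k hk => ⟨mn_le hk, ?_⟩, by omega, by omega⟩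
    have := (hm k hk).2
    omega
  -- count Bad1
  have h1 : Bad1.ncard ≤ (2*r+1) * ((2*N+1) * 2^(N+1)) := by
    set β : Lamp → ℤ × ℤ × Finset ℤ :=
      (fun x => (min 0 x.pos - mn x, x.pos, x.lamps.image (· - mn x))) with hβ1
    have hinj : Function.Injective β := by
      intro x y h
      simp only [hβ1, Prod.mk.injEq] at h
      obtain ⟨h1, h2, h3⟩ := h
      have hmn : mn x = mn y := by rw [h2] at h1; omega
      refine ext' h2 ?_
      rw [hmn] at h3
      exact Finset.image_injective (subZshift_inj (mn y)) h3
    have hrange : β '' Bad1 ⊆ ↑E1 := by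
      rintro y ⟨x, ⟨hxF, hxB⟩, rfl⟩
      obtain ⟨m, hm⟩ := mem_F_iff.1 hxF
      have h0 := hm 0 (zero_mem_dat x)
      have hp := hm x.pos (pos_mem_dat x)
      have hmn1 : m ≤ mn x := (hm _ (Finset.min'_mem _ _)).1
      have hmn2 : mn x ≤ 0 := mn_le (zero_mem_dat x)
      have hmn3 : mn x ≤ x.pos := mn_le (pos_mem_dat x)
      simp only [hE1, hβ1, Finset.mem_coe, Finset.mem_product, Finset.mem_Icc,
        Finset.mem_powerset]
      refine ⟨by push_cast; omega, by omega, ?_⟩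
      intro k hk
      obtain ⟨j, hj, rfl⟩ := Finset.mem_image.1 hk
      have hj1 := (hm _ (lamps_subset_dat x hj)).2
      have hj2 := mn_le (lamps_subset_dat x hj)
      rw [Finset.mem_Icc]
      omega
    have hfin : Bad1.Finite := (finite_F N).subset (fun x hx => hx.1)
    calc Bad1.ncard = (β '' Bad1).ncard := (Set.ncard_image_of_injOn hinj.injOn).symm
      _ ≤ (↑E1 : Set (ℤ × ℤ × Finset ℤ)).ncard :=
          Set.ncard_le_ncard hrange (Finset.finite_toSet E1)
      _ = E1.card := Set.ncard_coe_finset E1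
      _ = _ := hcardE1
  -- count Bad2
  have h2 : Bad2.ncard ≤ (2*r+1) * ((2*N+1) * 2^(N+1)) := by
    set β : Lamp → ℤ × ℤ × Finset ℤ :=
      (fun x => (mx x - max 0 x.pos, x.pos, x.lamps.image (· - (mx x - N)))) with hβ2
    have hinj : Function.Injective β := by
      intro x y h
      simp only [hβ2, Prod.mk.injEq] at h
      obtain ⟨h1, h2, h3⟩ := h
      have hmx : mx x = mx y := by rw [h2] at h1; omega
      refine ext' h2 ?_
      rw [hmx] at h3
      exact Finset.image_injective (subZshift_inj (mx y - N)) h3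
    have hrange : β '' Bad2 ⊆ ↑E1 := by
      rintro y ⟨x, ⟨hxF, hxB⟩, rfl⟩
      obtain ⟨m, hm⟩ := mem_F_iff.1 hxF
      have h0 := hm 0 (zero_mem_dat x)
      have hp := hm x.pos (pos_mem_dat x)
      have hmx1 : mx x ≤ m + N := (hm _ (Finset.max'_mem _ _)).2
      have hmx2 : (0:ℤ) ≤ mx x := le_mx (zero_mem_dat x)
      have hmx3 : x.pos ≤ mx x := le_mx (pos_mem_dat x)
      simp only [hE1, hβ2, Finset.mem_coe, Finset.mem_product, Finset.mem_Icc,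
        Finset.mem_powerset]
      refine ⟨by push_cast; omega, by omega, ?_⟩
      intro k hk
      obtain ⟨j, hj, rfl⟩ := Finset.mem_image.1 hk
      have hj1 := (hm _ (lamps_subset_dat x hj)).1
      have hj2 := le_mx (lamps_subset_dat x hj)
      rw [Finset.mem_Icc]
      omega
    have hfin : Bad2.Finite := (finite_F N).subset (fun x hx => hx.1)
    calc Bad2.ncard = (β '' Bad2).ncard := (Set.ncard_image_of_injOn hinj.injOn).symm
      _ ≤ (↑E1 : Set (ℤ × ℤ × Finset ℤ)).ncard :=
          Set.ncard_le_ncard hrange (Finset.finite_toSet E1)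
      _ = E1.card := Set.ncard_coe_finset E1
      _ = _ := hcardE1
  have hfin1 : Bad1.Finite := (finite_F N).subset (fun x hx => hx.1)
  have hfin2 : Bad2.Finite := (finite_F N).subset (fun x hx => hx.1)
  calc (F N \ G N r).ncard ≤ (Bad1 ∪ Bad2).ncard :=
        Set.ncard_le_ncard hsub (hfin1.union hfin2)
    _ ≤ Bad1.ncard + Bad2.ncard := Set.ncard_union_le _ _
    _ ≤ 2 * ((2*r+1) * ((2*N+1) * 2^(N+1))) := by omega

end Lamp

namespace Lamp

/-- Diameter bound sequence for the sets `E n`. -/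
def cc (l : ℕ → ℕ) : ℕ → ℕ
  | 0 => 1
  | 1 => 1
  | (m+2) => 2 * (2^(m+2) - 2) * cc l (m+1) + l (m+2)

lemma nat_aux (j L : ℕ) (hL : 1 ≤ L) : 2^(j+2) * L ≤ 17^(2^j * L) := by
  have h1 : (16:ℕ)^(2^j*L) ≤ 17^(2^j*L) := Nat.pow_le_pow_left (by norm_num) _
  have h2 : (16:ℕ)^(2^j*L) = 2^(2^(j+2)*L) := by
    rw [show (16:ℕ) = 2^4 by norm_num, ← pow_mul]
    congr 1
    rw [pow_add]
    ring
  have h3 : 2^(j+2)*L < 2^(2^(j+2)*L) := Nat.lt_two_pow_self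
  omega

lemma key_nat (t r : ℕ) (ht : 1 ≤ t) (hr : r ≤ 2*t) :
    (((r+1)^2*2^(r+1)) * (2*((2*r+1)*((2*(17^t)+1)*2^((17^t)+1)))) * ((r+1)^2*2^(r+1)))
        * 17^t
      ≤ (12960 * t^5 * 16^t) * (((17^t)+1)^2*2^(17^t)) := by
  set N := (17:ℕ)^t with hN
  set a := (2:ℕ)^r with ha
  set b := (2:ℕ)^N with hb
  have h2r : (2:ℕ)^(r+1) = a * 2 := pow_succ 2 r
  have h2N : (2:ℕ)^(N+1) = b * 2 := pow_succ 2 N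
  have haa : a * a ≤ 16^t := by
    have h4 : a*a = 2^(2*r) := by rw [ha, ← pow_add, two_mul]
    rw [h4]
    calc (2:ℕ)^(2*r) ≤ 2^(4*t) := Nat.pow_le_pow_right (by norm_num) (by omega)
      _ = 16^t := by rw [show (16:ℕ) = 2^4 by norm_num, ← pow_mul]
  have hNN : (2*N+1)*N ≤ 2*(N+1)^2 := by nlinarith
  calc (((r+1)^2*(2^(r+1))) * (2*((2*r+1)*((2*N+1)*2^(N+1)))) * ((r+1)^2*2^(r+1))) * N
      = 16 * (((r+1)^2*(r+1)^2) * ((2*r+1) * (((2*N+1)*N) * ((a*a) * b)))) := by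
        rw [h2r, h2N]; ring
    _ ≤ 16 * ((((3*t)^2*(3*t)^2)) * ((5*t) * ((2*(N+1)^2) * ((16^t) * b)))) := by
        have e1 : (r+1)^2*(r+1)^2 ≤ (3*t)^2*(3*t)^2 := by
          have : r + 1 ≤ 3*t := by omega
          exact Nat.mul_le_mul (Nat.pow_le_pow_left this 2) (Nat.pow_le_pow_left this 2)
        have e2 : 2*r+1 ≤ 5*t := by omega
        refine Nat.mul_le_mul_left 16 ?_
        refine Nat.mul_le_mul e1 ?_
        refine Nat.mul_le_mul e2 ?_
        exact Nat.mul_le_mul hNN (Nat.mul_le_mul haa le_rfl)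
    _ = (12960 * t^5 * 16^t) * ((N+1)^2 * b) := by ring

end Lamp

/-- With `l 1 = 1`, `l n = 17 ^ (2^n · l (n-1))` for `n ≥ 2`, `E 1 = F (l 1)` and
`E n = (E (n-1))^(2^n - 2) · F (l n) · (E (n-1))^(2^n - 2)` for `n ≥ 2`, one has
`|E n \ F (l n)| / |F (l n)| → 0`, equivalently `|F (l n)| / |E n| → 1`. -/
theorem stmt17 (l : ℕ → ℕ) (E : ℕ → Set Lamp)
    (hl1 : l 1 = 1) (hl : ∀ n ≥ 2, l n = 17 ^ (2 ^ n * l (n - 1)))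
    (hE1 : E 1 = Lamp.F (l 1))
    (hE : ∀ n ≥ 2, E n = (E (n - 1)) ^ (2 ^ n - 2) * Lamp.F (l n) * (E (n - 1)) ^ (2 ^ n - 2)) :
    Tendsto (fun n => ((E n \ Lamp.F (l n)).ncard : ℝ) / ((Lamp.F (l n)).ncard : ℝ))
        atTop (𝓝 0) ∧
      Tendsto (fun n => ((Lamp.F (l n)).ncard : ℝ) / ((E n).ncard : ℝ)) atTop (𝓝 1) := by
  classical
  open Lamp in
  have hlpos : ∀ m, 1 ≤ m → 1 ≤ l m := by
    intro m hm
    rcases Nat.lt_or_ge m 2 with h2 | h2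
    · have : m = 1 := by omega
      rw [this, hl1]
    · rw [hl m h2]
      exact Nat.one_le_pow _ _ (by norm_num)
  have hccrec : ∀ m, 1 ≤ m →
      Lamp.cc l (m+1) = 2 * (2^(m+1) - 2) * Lamp.cc l m + l (m+1) := by
    intro m hm
    obtain ⟨k, rfl⟩ : ∃ k, m = k + 1 := ⟨m - 1, by omega⟩
    rfl
  have hccle : ∀ m, 1 ≤ m → Lamp.cc l m ≤ 2 * l m := by
    intro m hm
    induction m, hm using Nat.le_induction with
    | base => simp [Lamp.cc, hl1]
    | succ m hm ih =>
      rw [hccrec m hm]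
      have hlm1 : l (m+1) = 17^(2^(m+1) * l m) := by
        have := hl (m+1) (by omega)
        simpa using this
      have haux : 2^(m+3) * l m ≤ l (m+1) := by
        rw [hlm1]
        exact Lamp.nat_aux (m+1) (l m) (hlpos m hm)
      have e : 2*(2^(m+1)-2) * Lamp.cc l m ≤ 2^(m+3) * l m := by
        have h1 : 2*(2^(m+1)-2) ≤ 2^(m+2) := by
          have h2 : (2:ℕ)^(m+2) = 2^(m+1) * 2 := pow_succ 2 (m+1)
          omega
        calc 2*(2^(m+1)-2) * Lamp.cc l m ≤ 2^(m+2) * (2 * l m) :=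
              Nat.mul_le_mul h1 ih
          _ = 2^(m+3) * l m := by rw [show (2:ℕ)^(m+3) = 2^(m+2)*2 from pow_succ 2 (m+2)]; ring
      omega
  have hEF : ∀ m, 1 ≤ m → E m ⊆ Lamp.F (Lamp.cc l m) ∧ (1:Lamp) ∈ E m := by
    intro m hm
    induction m, hm using Nat.le_induction with
    | base =>
      constructor
      · rw [hE1, hl1]
        exact Lamp.F_mono (by simp [Lamp.cc])
      · rw [hE1]
        exact Lamp.one_mem_F _
    | succ m hm ih =>
      have hrec := hE (m+1) (by omega)
      simp only [Nat.add_sub_cancel] at hrec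
      constructor
      · rw [hrec, hccrec m hm]
        intro x hx
        rw [Set.mem_mul] at hx
        obtain ⟨w, hw, b, hb, rfl⟩ := hx
        rw [Set.mem_mul] at hw
        obtain ⟨a, ha, y, hy, rfl⟩ := hw
        have hmem := Lamp.mul_mem_F (Lamp.mul_mem_F
          (Lamp.pow_subset_F ih.1 (2^(m+1)-2) ha) hy)
          (Lamp.pow_subset_F ih.1 (2^(m+1)-2) hb)
        have heq : (2^(m+1)-2) * Lamp.cc l m + l (m+1) + (2^(m+1)-2) * Lamp.cc l m
            = 2 * (2^(m+1)-2) * Lamp.cc l m + l (m+1) := by ring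
        rwa [heq] at hmem
      · rw [hrec]
        have h1 := Lamp.one_mem_pow ih.2 (2^(m+1)-2)
        have := Set.mul_mem_mul (Set.mul_mem_mul h1 (Lamp.one_mem_F (l (m+1)))) h1
        simpa using this
  have hFE : ∀ m, 1 ≤ m → Lamp.F (l m) ⊆ E m := by
    intro m hm
    rcases Nat.lt_or_ge m 2 with h2 | h2
    · have : m = 1 := by omega
      rw [this, hE1]
    · rw [hE m h2]
      intro x hx
      have h1m := (hEF (m-1) (by omega)).2
      have h1 := Lamp.one_mem_pow h1m (2^m - 2)
      have := Set.mul_mem_mul (Set.mul_mem_mul h1 hx) h1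
      simpa using this
  -- the key quantitative bound
  have key : ∀ n, 2 ≤ n → ((E n \ Lamp.F (l n)).ncard : ℝ) / ((Lamp.F (l n)).ncard : ℝ) ≤
      12960 * (((2^n * l (n-1) : ℕ):ℝ)^5 * ((16:ℝ)/17)^(2^n * l (n-1))) := by
    intro n hn
    set t := 2^n * l (n-1) with ht
    set N := l n with hN
    have hNt : N = 17 ^ t := hl n hn
    set r := (2^n - 2) * Lamp.cc l (n-1) with hr
    have h1 : 1 ≤ n - 1 := by omega
    have hln1 := hlpos (n-1) h1
    have ht1 : 1 ≤ t := by
      have : 0 < 2^n := Nat.pow_pos (n := n) (by norm_num)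
      calc 1 = 1 * 1 := by norm_num
        _ ≤ 2^n * l (n-1) := Nat.mul_le_mul this hln1
    have hrt : r ≤ 2 * t := by
      calc r ≤ 2^n * (2 * l (n-1)) :=
            Nat.mul_le_mul (Nat.sub_le _ _) (hccle (n-1) h1)
        _ = 2 * t := by rw [ht]; ring
    set A := E (n-1) ^ (2^n - 2) with hA'
    have hA : A ⊆ Lamp.F r := Lamp.pow_subset_F (hEF (n-1) h1).1 _
    have hErec : E n = A * Lamp.F N * A := hE n hn
    have hdiff : E n \ Lamp.F N ⊆ A * (Lamp.F N \ Lamp.G N r) * A := by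
      rintro x ⟨hx, hxF⟩
      rw [hErec, Set.mem_mul] at hx
      obtain ⟨w, hw, b, hb, rfl⟩ := hx
      rw [Set.mem_mul] at hw
      obtain ⟨a, ha, y, hy, rfl⟩ := hw
      by_cases hyG : y ∈ Lamp.G N r
      · exact absurd (Lamp.sandwich_mem_F (hA ha) hyG (hA hb)) hxF
      · exact Set.mul_mem_mul (Set.mul_mem_mul ha ⟨hy, hyG⟩) hb
    have hAfin : A.Finite := (Lamp.finite_F r).subset hA
    have hXfin : (Lamp.F N \ Lamp.G N r).Finite := (Lamp.finite_F N).diff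
    have hAcard : A.ncard ≤ (r+1)^2*2^(r+1) :=
      le_trans (Set.ncard_le_ncard hA (Lamp.finite_F r)) (Lamp.card_F_upper r)
    have hnum : (E n \ Lamp.F N).ncard ≤
        ((r+1)^2*2^(r+1)) * (2*((2*r+1)*((2*N+1)*2^(N+1)))) * ((r+1)^2*2^(r+1)) := by
      calc (E n \ Lamp.F N).ncard ≤ (A * (Lamp.F N \ Lamp.G N r) * A).ncard :=
            Set.ncard_le_ncard hdiff (((hAfin.mul hXfin).mul hAfin))
        _ ≤ (A * (Lamp.F N \ Lamp.G N r)).ncard * A.ncard := Lamp.ncard_mul_le _ _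
        _ ≤ A.ncard * (Lamp.F N \ Lamp.G N r).ncard * A.ncard :=
            Nat.mul_le_mul_right _ (Lamp.ncard_mul_le _ _)
        _ ≤ _ := Nat.mul_le_mul (Nat.mul_le_mul hAcard (Lamp.card_bad N r)) hAcard
    have hden : (N+1)^2*2^N ≤ (Lamp.F N).ncard := Lamp.card_F_lower N
    have hkey := Lamp.key_nat t r ht1 hrt
    rw [← hNt] at hkey
    -- pass to the reals
    have hP : (0:ℝ) < (((N+1)^2*2^N : ℕ):ℝ) := by positivity
    have h17 : (0:ℝ) < (17:ℝ)^t := by positivity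
    have hden' : (((N+1)^2*2^N : ℕ):ℝ) ≤ ((Lamp.F N).ncard : ℝ) := by exact_mod_cast hden
    have step1 : ((E n \ Lamp.F N).ncard : ℝ) / ((Lamp.F N).ncard : ℝ) ≤
        ((((r+1)^2*2^(r+1)) * (2*((2*r+1)*((2*N+1)*2^(N+1)))) * ((r+1)^2*2^(r+1)) : ℕ):ℝ)
          / (((N+1)^2*2^N : ℕ):ℝ) := by
      apply div_le_div₀ (by positivity) (by exact_mod_cast hnum) hP hden'
    have step2 : ((((r+1)^2*2^(r+1)) * (2*((2*r+1)*((2*N+1)*2^(N+1)))) * ((r+1)^2*2^(r+1)) : ℕ):ℝ)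
          / (((N+1)^2*2^N : ℕ):ℝ) ≤ (((12960 * t^5 * 16^t : ℕ)):ℝ) / (17:ℝ)^t := by
      rw [div_le_div_iff₀ hP h17]
      have hcast : ((17:ℝ))^t = ((N : ℕ):ℝ) := by rw [hNt]; push_cast; ring
      rw [hcast]
      exact_mod_cast hkey
    have step3 : (((12960 * t^5 * 16^t : ℕ)):ℝ) / (17:ℝ)^t =
        12960 * (((t:ℕ):ℝ)^5 * ((16:ℝ)/17)^t) := by
      push_cast
      rw [div_pow]
      ring
    calc ((E n \ Lamp.F N).ncard : ℝ) / ((Lamp.F N).ncard : ℝ)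
        ≤ _ := step1
      _ ≤ _ := step2
      _ = _ := step3
  -- limit of the comparison sequence
  have hg : Tendsto (fun s : ℕ => 12960 * (((s:ℕ):ℝ)^5 * ((16:ℝ)/17)^s)) atTop (𝓝 0) := by
    have hsum : Summable (fun s : ℕ => ((s:ℝ)^5 * ((16:ℝ)/17)^s)) := by
      apply Summable.of_norm
      exact summable_norm_pow_mul_geometric_of_norm_lt_one 5
        (by rw [Real.norm_eq_abs]; rw [abs_of_pos (by norm_num)]; norm_num)
    have h0 := hsum.tendsto_atTop_zero
    have := h0.const_mul (12960:ℝ)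
    simpa using this
  have hu : Tendsto (fun n => 2^n * l (n-1)) atTop atTop := by
    apply tendsto_atTop_mono' atTop ?_ tendsto_id
    filter_upwards [eventually_ge_atTop 2] with n hn
    have h1 : 1 ≤ l (n-1) := hlpos (n-1) (by omega)
    calc n ≤ 2^n := le_of_lt (Nat.lt_two_pow_self (n := n))
      _ = 2^n * 1 := by ring
      _ ≤ 2^n * l (n-1) := Nat.mul_le_mul_left _ h1
  have hcomp : Tendsto
      (fun n => 12960 * (((2^n * l (n-1) : ℕ):ℝ)^5 * ((16:ℝ)/17)^(2^n * l (n-1))))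
      atTop (𝓝 0) := hg.comp hu
  have first : Tendsto (fun n => ((E n \ Lamp.F (l n)).ncard : ℝ) / ((Lamp.F (l n)).ncard : ℝ))
      atTop (𝓝 0) := by
    apply squeeze_zero' ?_ ?_ hcomp
    · filter_upwards with n
      positivity
    · filter_upwards [eventually_ge_atTop 2] with n hn
      exact key n hn
  refine ⟨first, ?_⟩
  have haux : Tendsto (fun n =>
      (1:ℝ)/(((E n \ Lamp.F (l n)).ncard : ℝ) / ((Lamp.F (l n)).ncard : ℝ) + 1))
      atTop (𝓝 1) := by
    have h1 : Tendsto (fun n =>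
        ((E n \ Lamp.F (l n)).ncard : ℝ) / ((Lamp.F (l n)).ncard : ℝ) + 1)
        atTop (𝓝 (0 + 1)) := first.add tendsto_const_nhds
    have h2 := Tendsto.div
      (tendsto_const_nhds : Tendsto (fun _ : ℕ => (1:ℝ)) atTop (𝓝 1)) h1 (by norm_num)
    have h3 : (1:ℝ)/(0+1) = 1 := by norm_num
    rwa [h3] at h2
  apply Filter.Tendsto.congr' ?_ haux
  filter_upwards [eventually_ge_atTop 1] with n hn
  have hsubFE := hFE n hn
  have hfinE : (E n).Finite := (Lamp.finite_F (Lamp.cc l n)).subset (hEF n hn).1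
  have hsplit : (E n \ Lamp.F (l n)).ncard + (Lamp.F (l n)).ncard = (E n).ncard :=
    Set.ncard_diff_add_ncard_of_subset hsubFE hfinE
  have hFpos : (0:ℝ) < ((Lamp.F (l n)).ncard : ℝ) := by
    have h1 := Lamp.card_F_lower (l n)
    have h2 : 0 < (l n + 1)^2 * 2^(l n) := by positivity
    have : 0 < (Lamp.F (l n)).ncard := lt_of_lt_of_le h2 h1
    exact_mod_cast this
  have hEeq : ((E n).ncard : ℝ) =
      ((E n \ Lamp.F (l n)).ncard : ℝ) + ((Lamp.F (l n)).ncard : ℝ) := by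
    exact_mod_cast hsplit.symm
  rw [hEeq]
  set a := ((E n \ Lamp.F (l n)).ncard : ℝ)
  set b := ((Lamp.F (l n)).ncard : ℝ)
  have ha : 0 ≤ a := by positivity
  have hab : 0 < a + b := by linarith
  field_simp
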